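/- Let X be a Banach space, (P_n) a sequence of continuous finite-rank linear operators on X with sup_n ‖P_n‖ ≤ λ and P_n z → z for every z in a closed subspace F, and let (x_n) be a weakly null sequence in F. Then there exist a subsequence (x_{n_i}) and indices m_1 < m_2 < … such that ‖P_{m_i}(x_{n_j})‖ ≤ 2^{−(i+1)} for all j > i, and ‖x_{n_i} − P_{m_i}(x_{n_i})‖ ≤ 2^{−(i+1)} for all i. -/

import Mathlib

open Filter

theorem stmt_16 {X : Type*} [NormedAddCommGroup X] [NormedSpace ℝ X]
    [CompleteSpace X]
    (P : ℕ → X →L[ℝ] X)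
    (hfr : ∀ n, FiniteDimensional ℝ (LinearMap.range (P n : X →ₗ[ℝ] X)))
    (lam : ℝ) (hlam : ∀ n, ‖P n‖ ≤ lam)
    (F : Submodule ℝ X) (hFclosed : IsClosed (F : Set X))
    (happrox : ∀ z ∈ F, Tendsto (fun n => P n z) atTop (nhds z))
    (x : ℕ → X) (hxF : ∀ n, x n ∈ F)
    (hweak : ∀ f : X →L[ℝ] ℝ, Tendsto (fun n => f (x n)) atTop (nhds 0)) :
    ∃ nseq mseq : ℕ → ℕ, StrictMono nseq ∧ StrictMono mseq ∧
      (∀ i j : ℕ, i < j →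
        ‖P (mseq i) (x (nseq j))‖ ≤ (1 / 2 : ℝ) ^ (i + 1)) ∧
      (∀ i : ℕ, ‖x (nseq i) - P (mseq i) (x (nseq i))‖ ≤ (1 / 2 : ℝ) ^ (i + 1)) := by
  classical
  -- Key gliding-hump fact: for each fixed m, ‖P m (x n)‖ → 0.
  have key : ∀ m : ℕ, Tendsto (fun n => ‖P m (x n)‖) atTop (nhds 0) := by
    intro m
    haveI := hfr m
    set V := LinearMap.range ((P m : X →ₗ[ℝ] X)) with hV
    have hmem : ∀ y : X, P m y ∈ V := fun y => LinearMap.mem_range_self _ y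
    let Q : X →L[ℝ] V := (P m).codRestrict V hmem
    let b := Module.finBasis ℝ V
    have hcoord : ∀ i, Tendsto (fun n => b.equivFun (Q (x n)) i) atTop (nhds 0) := by
      intro i
      have hf : Tendsto (fun n =>
          (LinearMap.toContinuousLinearMap (b.coord i) |>.comp Q) (x n)) atTop (nhds 0) :=
        hweak _
      simpa [Module.Basis.equivFun_apply, Module.Basis.coord_apply] using hf
    have hQ : Tendsto (fun n => Q (x n)) atTop (nhds 0) := by
      have hpi : Tendsto (fun n => b.equivFunL (Q (x n))) atTop (nhds 0) := by
        rw [tendsto_pi_nhds]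
        intro i
        simpa [Module.Basis.equivFunL] using hcoord i
      have h2 := (b.equivFunL.symm.continuous.tendsto 0).comp hpi
      simpa [Function.comp_def] using h2
    have := hQ.norm
    simp only [norm_zero] at this
    convert this using 2
    rfl
  -- Existence of the next n.
  have Hn : ∀ (j mmax N0 : ℕ), ∃ n, n > N0 ∧ ∀ m ≤ mmax, ‖P m (x n)‖ ≤ (1 / 2 : ℝ) ^ (j + 1) := by
    intro j mmax N0
    have hev : ∀ᶠ n in atTop, ∀ m ∈ Finset.range (mmax + 1),
        ‖P m (x n)‖ ≤ (1 / 2 : ℝ) ^ (j + 1) := by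
      rw [eventually_all_finset]
      intro m _
      have := (key m).eventually (ge_mem_nhds (show (0:ℝ) < (1/2:ℝ)^(j+1) by positivity))
      filter_upwards [this] with n hn using hn
    obtain ⟨n, hn1, hn2⟩ := ((hev.and (eventually_gt_atTop N0)).exists)
    exact ⟨n, hn2, fun m hm => hn1 m (Finset.mem_range.2 (Nat.lt_succ_of_le hm))⟩
  -- Existence of the next m.
  have Hm : ∀ (n mprev j : ℕ), ∃ m, m > mprev ∧
      ‖x n - P m (x n)‖ ≤ (1 / 2 : ℝ) ^ (j + 1) := by
    intro n mprev j
    have h := (happrox (x n) (hxF n))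
    have h2 : Tendsto (fun k => ‖x n - P k (x n)‖) atTop (nhds 0) := by
      have := (tendsto_const_nhds (x := x n) (f := atTop)).sub h
      simpa using this.norm
    have hev := h2.eventually (ge_mem_nhds (show (0:ℝ) < (1/2:ℝ)^(j+1) by positivity))
    obtain ⟨m, hm1, hm2⟩ := ((hev.and (eventually_gt_atTop mprev)).exists)
    exact ⟨m, hm2, hm1⟩
  -- Recursive construction of the pair sequence.
  let s : ℕ → ℕ × ℕ := fun i => Nat.rec
    (⟨0, Classical.choose (Hm 0 0 0)⟩ : ℕ × ℕ)
    (fun j p =>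
      let n' := Classical.choose (Hn j p.2 p.1)
      ⟨n', Classical.choose (Hm n' p.2 (j + 1))⟩) i
  set nseq : ℕ → ℕ := fun i => (s i).1 with hnseq
  set mseq : ℕ → ℕ := fun i => (s i).2 with hmseq
  have hs_succ : ∀ j, s (j + 1) =
      ⟨Classical.choose (Hn j (s j).2 (s j).1),
       Classical.choose (Hm (Classical.choose (Hn j (s j).2 (s j).1)) (s j).2 (j + 1))⟩ :=
    fun j => rfl
  have hn_spec : ∀ j, nseq (j + 1) > nseq j ∧
      ∀ m ≤ mseq j, ‖P m (x (nseq (j + 1)))‖ ≤ (1 / 2 : ℝ) ^ (j + 1) := by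
    intro j
    have := Classical.choose_spec (Hn j (s j).2 (s j).1)
    exact this
  have hm_spec : ∀ j, mseq (j + 1) > mseq j ∧
      ‖x (nseq (j + 1)) - P (mseq (j + 1)) (x (nseq (j + 1)))‖ ≤ (1 / 2 : ℝ) ^ (j + 1 + 1) := by
    intro j
    have := Classical.choose_spec
      (Hm (Classical.choose (Hn j (s j).2 (s j).1)) (s j).2 (j + 1))
    exact this
  have hm0 : ‖x (nseq 0) - P (mseq 0) (x (nseq 0))‖ ≤ (1 / 2 : ℝ) ^ (0 + 1) := by
    have := Classical.choose_spec (Hm 0 0 0)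
    exact this.2
  have hnmono : StrictMono nseq := strictMono_nat_of_lt_succ (fun j => (hn_spec j).1)
  have hmmono : StrictMono mseq := strictMono_nat_of_lt_succ (fun j => (hm_spec j).1)
  refine ⟨nseq, mseq, hnmono, hmmono, ?_, ?_⟩
  · intro i j hij
    obtain ⟨k, rfl⟩ := Nat.exists_eq_add_of_lt hij
    -- j = i + k + 1
    have hik : i ≤ i + k := Nat.le_add_right i k
    have h1 : ‖P (mseq i) (x (nseq (i + k + 1)))‖ ≤ (1 / 2 : ℝ) ^ (i + k + 1) :=
      (hn_spec (i + k)).2 (mseq i) (hmmono.monotone hik)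
    refine h1.trans ?_
    apply pow_le_pow_of_le_one (by norm_num) (by norm_num)
    omega
  · intro i
    cases i with
    | zero => exact hm0
    | succ j => exact (hm_spec j).2
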